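/- Let T be a decision tree over a training data set (E, λ), let v be a cut of T with feature j = feat(v), and let x₀ ∈ ℝ be smaller than e[j] for every example e of E. Let x′ be the maximum of the finite set {e[j] : e ∈ E, e[j] ≤ thr(v)} ∪ {x₀}. Then the decision tree T′ obtained from T by replacing thr(v) with x′ assigns every example of E to the same leaf as T does; in particular, T and T′ have the same number of errors on (E, λ). -/

import Mathlib

/-- Decision trees with features of type `α`: each leaf carries a class label
(`true` = blue, `false` = red), each internal node (a *cut*) carries a feature
and a real threshold. -/
inductive DTree (α : Type) : Type
  | leaf (label : Bool) : DTree α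
  | node (feat : α) (thr : ℝ) (left right : DTree α) : DTree α

namespace DTree

/-- The class that the tree assigns to the example `e`. -/
noncomputable def classify {α : Type} : DTree α → (α → ℝ) → Bool
  | leaf c, _ => c
  | node f x l r, e => if e f ≤ x then l.classify e else r.classify e

/-- The path (sequence of left/right moves, `false` = left child, `true` = right child)
from the root to the leaf to which the tree assigns the example `e`. -/
noncomputable def pathOf {α : Type} : DTree α → (α → ℝ) → List Bool
  | leaf _, _ => []
  | node f x l r, e => if e f ≤ x then false :: l.pathOf e else true :: r.pathOf e

/-- The subtree rooted at position `p` (positions are paths from the root,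
`false` = left child, `true` = right child). -/
def subtreeAt {α : Type} : DTree α → List Bool → Option (DTree α)
  | t, [] => some t
  | leaf _, _ :: _ => none
  | node _ _ l r, b :: q => if b then r.subtreeAt q else l.subtreeAt q

/-- Replace the threshold of the cut at position `p` by `y`. -/
def setThr {α : Type} : DTree α → List Bool → ℝ → DTree α
  | node f _ l r, [], y => node f y l r
  | node f x l r, b :: q, y =>
      if b then node f x l (r.setThr q y) else node f x (l.setThr q y) r
  | t, _, _ => t

end DTree

/-- The number of errors of `T` on the training data set `(E, lab)`. -/
noncomputable def errorCount {α ι : Type} [Fintype ι] (E : ι → α → ℝ)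
    (lab : ι → Bool) (T : DTree α) : ℕ :=
  (Finset.univ.filter (fun i => T.classify (E i) ≠ lab i)).card

lemma aux_path {α : Type} (j : α) (x x' : ℝ)
    (T : DTree α) (p : List Bool) (l r : DTree α)
    (hp : T.subtreeAt p = some (DTree.node j x l r))
    (e : α → ℝ) (hiff : e j ≤ x' ↔ e j ≤ x) :
    (T.setThr p x').pathOf e = T.pathOf e := by
  induction p generalizing T with
  | nil =>
    simp [DTree.subtreeAt] at hp
    subst hp
    simp only [DTree.setThr, DTree.pathOf]
    by_cases h : e j ≤ x
    · rw [if_pos h, if_pos (hiff.2 h)]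
    · rw [if_neg h, if_neg (fun h' => h (hiff.1 h'))]
  | cons b q ih =>
    cases T with
    | leaf c => simp [DTree.subtreeAt] at hp
    | node f y L R =>
      simp only [DTree.subtreeAt] at hp
      cases b with
      | false =>
        simp only [if_neg Bool.false_ne_true] at hp
        simp only [DTree.setThr, if_neg Bool.false_ne_true, DTree.pathOf]
        by_cases h : e f ≤ y
        · rw [if_pos h, if_pos h, ih L hp]
        · rw [if_neg h, if_neg h]
      | true =>
        simp only [if_pos rfl, if_pos trivial] at hp
        simp only [DTree.setThr, if_pos rfl, if_pos trivial, DTree.pathOf]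
        by_cases h : e f ≤ y
        · rw [if_pos h, if_pos h]
        · rw [if_neg h, if_neg h, ih R hp]

lemma aux_classify {α : Type} (j : α) (x x' : ℝ)
    (T : DTree α) (p : List Bool) (l r : DTree α)
    (hp : T.subtreeAt p = some (DTree.node j x l r))
    (e : α → ℝ) (hiff : e j ≤ x' ↔ e j ≤ x) :
    (T.setThr p x').classify e = T.classify e := by
  induction p generalizing T with
  | nil =>
    simp [DTree.subtreeAt] at hp
    subst hp
    simp only [DTree.setThr, DTree.classify]
    by_cases h : e j ≤ x
    · rw [if_pos h, if_pos (hiff.2 h)]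
    · rw [if_neg h, if_neg (fun h' => h (hiff.1 h'))]
  | cons b q ih =>
    cases T with
    | leaf c => simp [DTree.subtreeAt] at hp
    | node f y L R =>
      simp only [DTree.subtreeAt] at hp
      cases b with
      | false =>
        simp only [if_neg Bool.false_ne_true] at hp
        simp only [DTree.setThr, if_neg Bool.false_ne_true, DTree.classify]
        by_cases h : e f ≤ y
        · rw [if_pos h, if_pos h, ih L hp]
        · rw [if_neg h, if_neg h]
      | true =>
        simp only [if_pos rfl, if_pos trivial] at hp
        simp only [DTree.setThr, if_pos rfl, if_pos trivial, DTree.classify]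
        by_cases h : e f ≤ y
        · rw [if_pos h, if_pos h]
        · rw [if_neg h, if_neg h, ih R hp]

/-- Let `v` be a cut of `T` (at position `p`) with feature `j` and
threshold `x`, and let `x₀` be smaller than `e j` for every example `e` of `E`.
Let `x'` be the maximum of the finite set `{e j : e ∈ E, e j ≤ x} ∪ {x₀}`. Then the
tree `T'` obtained from `T` by replacing the threshold of `v` with `x'` assigns every
example of `E` to the same leaf as `T` does; in particular `T` and `T'` have the same
number of errors on `(E, lab)`. -/
theorem stmt2 {α ι : Type} [Fintype ι] (E : ι → α → ℝ) (lab : ι → Bool)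
    (T : DTree α) (p : List Bool) (j : α) (x : ℝ) (l r : DTree α)
    (hp : T.subtreeAt p = some (DTree.node j x l r))
    (x₀ : ℝ) (hx₀ : ∀ i : ι, x₀ < E i j) (x' : ℝ)
    (hx' : x' = (insert x₀ ((Finset.univ.filter (fun i : ι => E i j ≤ x)).image
        (fun i => E i j))).max' (Finset.insert_nonempty _ _)) :
    (∀ i : ι, (T.setThr p x').pathOf (E i) = T.pathOf (E i)) ∧
      errorCount E lab (T.setThr p x') = errorCount E lab T := by
  have hiff : ∀ i : ι, E i j ≤ x' ↔ E i j ≤ x := by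
    intro i
    constructor
    · intro h
      have hm := (insert x₀ ((Finset.univ.filter (fun i : ι => E i j ≤ x)).image
          (fun i => E i j))).max'_mem (Finset.insert_nonempty _ _)
      rw [← hx'] at hm
      rcases Finset.mem_insert.1 hm with h1 | h1
      · exact absurd (h.trans_eq h1) (not_le.2 (hx₀ i))
      · obtain ⟨k, -, hk⟩ := Finset.mem_image.1 h1
        have := Finset.mem_filter.1 (Finset.mem_image.1 h1).choose_spec.1
        obtain ⟨k, hk, hke⟩ := Finset.mem_image.1 h1
        exact h.trans (hke ▸ (Finset.mem_filter.1 hk).2)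
    · intro h
      have : E i j ∈ insert x₀ ((Finset.univ.filter (fun i : ι => E i j ≤ x)).image
          (fun i => E i j)) := Finset.mem_insert_of_mem
        (Finset.mem_image.2 ⟨i, Finset.mem_filter.2 ⟨Finset.mem_univ i, h⟩, rfl⟩)
      rw [hx']
      exact Finset.le_max' _ _ this
  constructor
  · intro i; exact aux_path j x x' T p l r hp (E i) (hiff i)
  · unfold errorCount
    congr 1
    apply Finset.filter_congr
    intro i _
    rw [aux_classify j x x' T p l r hp (E i) (hiff i)]
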